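/- The b-SEGA auxiliary-vector update h⁺ = h + I_S(∇f(x) − h) satisfies, for all x, h ∈ ℝ^d: E[‖h⁺ − ∇f(x*)‖²] ≤ (1 − b/d) ‖h − ∇f(x*)‖² + (2bL/d) · D_f(x, x*). -/

import Mathlib

open Finset
open scoped RealInnerProductSpace

/-- `maskE S a` is the vector `I_S a`: the coordinates of `a` in `S`, zero elsewhere. -/
def maskE {d : ℕ} (S : Finset (Fin d)) (a : EuclideanSpace ℝ (Fin d)) :
    EuclideanSpace ℝ (Fin d) := WithLp.toLp 2 (fun j => if j ∈ S then a j else 0)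

lemma norm_sq_eq_sum' {d : ℕ} (w : EuclideanSpace ℝ (Fin d)) :
    ‖w‖ ^ 2 = ∑ j, (w j) ^ 2 := by
  rw [EuclideanSpace.norm_eq, Real.sq_sqrt (by positivity)]
  simp [sq_abs]

lemma count_mem_powersetCard {d b : ℕ} (hb1 : 1 ≤ b) (j : Fin d) :
    (((Finset.univ : Finset (Fin d)).powersetCard b).filter (fun S => j ∈ S)).card
      = (d - 1).choose (b - 1) := by
  have : (((Finset.univ : Finset (Fin d)).powersetCard b).filter (fun S => j ∈ S)).card
      = (((Finset.univ : Finset (Fin d)).erase j).powersetCard (b - 1)).card := by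
    apply Finset.card_bij' (fun S _ => S.erase j) (fun T _ => insert j T)
    · intro S hS
      simp only [Finset.mem_filter] at hS
      exact Finset.insert_erase hS.2
    · intro T hT
      rw [Finset.mem_powersetCard] at hT
      have hjT : j ∉ T := fun hj => (Finset.mem_erase.mp (hT.1 hj)).1 rfl
      exact Finset.erase_insert hjT
    · intro S hS
      simp only [Finset.mem_filter, Finset.mem_powersetCard] at hS
      rw [Finset.mem_powersetCard]
      refine ⟨fun x hx => ?_, ?_⟩
      · rcases Finset.mem_erase.mp hx with ⟨hxj, _⟩
        exact Finset.mem_erase.mpr ⟨hxj, Finset.mem_univ x⟩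
      · rw [Finset.card_erase_of_mem hS.2, hS.1.2]
    · intro T hT
      rw [Finset.mem_powersetCard] at hT
      have hjT : j ∉ T := fun hj => (Finset.mem_erase.mp (hT.1 hj)).1 rfl
      simp only [Finset.mem_filter, Finset.mem_powersetCard]
      refine ⟨⟨fun x _ => Finset.mem_univ x, ?_⟩, Finset.mem_insert_self j T⟩
      rw [Finset.card_insert_of_notMem hjT, hT.2]
      omega
  rw [this, Finset.card_powersetCard, Finset.card_erase_of_mem (Finset.mem_univ j),
    Finset.card_univ, Fintype.card_fin]

/-- the `b`-SEGA auxiliary-vector update `h⁺ = h + I_S(∇f(x) − h)` satisfies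
`E[‖h⁺ − ∇f(x*)‖²] ≤ (1 − b/d)‖h − ∇f(x*)‖² + (2bL/d) D_f(x, x*)`. -/
theorem stmt_18
    {d b : ℕ} (hb1 : 1 ≤ b) (hbd : b ≤ d)
    (f : EuclideanSpace ℝ (Fin d) → ℝ)
    (f' : EuclideanSpace ℝ (Fin d) → EuclideanSpace ℝ (Fin d)) (L : ℝ)
    (hsmooth : ∀ x y, f y ≤ f x + ⟪f' x, y - x⟫ + L / 2 * ‖y - x‖ ^ 2)
    (hconv : ∀ x y, f x + ⟪f' x, y - x⟫ ≤ f y)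
    (xstar : EuclideanSpace ℝ (Fin d))
    (x h : EuclideanSpace ℝ (Fin d)) :
    ((d.choose b : ℝ))⁻¹ * ∑ S ∈ (Finset.univ : Finset (Fin d)).powersetCard b,
        ‖h + maskE S (f' x - h) - f' xstar‖ ^ 2
    ≤ (1 - (b : ℝ) / d) * ‖h - f' xstar‖ ^ 2
      + 2 * b * L / d * (f x - f xstar - ⟪f' xstar, x - xstar⟫) := by
  have hd1 : 1 ≤ d := hb1.trans hbd
  set g : EuclideanSpace ℝ (Fin d) := f' x - f' xstar with hg
  set D : ℝ := f x - f xstar - ⟪f' xstar, x - xstar⟫ with hD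
  -- D ≥ 0
  have hDnn : 0 ≤ D := by
    have := hconv xstar x
    simp only [hD]
    linarith
  -- L ≥ 0
  have hLnn : 0 ≤ L := by
    set e : EuclideanSpace ℝ (Fin d) := EuclideanSpace.single (⟨0, hd1⟩ : Fin d) (1 : ℝ)
    have he : ‖e‖ = 1 := by simp [e, EuclideanSpace.norm_single]
    have h1 := hsmooth x (x + e)
    have h2 := hconv x (x + e)
    rw [add_sub_cancel_left] at h1 h2
    rw [he] at h1
    nlinarith
  -- key inequality
  have key : ∀ t : ℝ, t * ‖g‖ ^ 2 - L / 2 * t ^ 2 * ‖g‖ ^ 2 ≤ D := by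
    intro t
    have h1 := hsmooth x (x - t • g)
    have h2 := hconv xstar (x - t • g)
    have e1 : x - t • g - x = -(t • g) := by abel
    have e2 : x - t • g - xstar = (x - xstar) - t • g := by abel
    rw [e1] at h1
    rw [e2] at h2
    rw [inner_neg_right, real_inner_smul_right] at h1
    rw [inner_sub_right, real_inner_smul_right] at h2
    have e3 : ‖-(t • g)‖ ^ 2 = t ^ 2 * ‖g‖ ^ 2 := by
      rw [norm_neg, norm_smul, mul_pow, Real.norm_eq_abs, sq_abs]
    rw [e3] at h1
    have e4 : ⟪f' x, g⟫ - ⟪f' xstar, g⟫ = ‖g‖ ^ 2 := by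
      rw [← inner_sub_left, hg, real_inner_self_eq_norm_sq]
    have e5 : t * ⟪f' x, g⟫ - t * ⟪f' xstar, g⟫ = t * ‖g‖ ^ 2 := by
      rw [← mul_sub, e4]
    simp only [hD]
    linarith
  -- ‖g‖² ≤ 2 L D
  have hU : ‖g‖ ^ 2 ≤ 2 * L * D := by
    rcases hLnn.lt_or_eq with hLpos | hL0
    · have hk := key (1 / L)
      have hL' : L ≠ 0 := ne_of_gt hLpos
      have heq : 1 / L * ‖g‖ ^ 2 - L / 2 * (1 / L) ^ 2 * ‖g‖ ^ 2 = ‖g‖ ^ 2 / (2 * L) := by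
        field_simp
        ring
      rw [heq, div_le_iff₀ (by positivity)] at hk
      linarith
    · by_contra hcon
      push_neg at hcon
      rw [← hL0] at hcon
      have hgpos : 0 < ‖g‖ ^ 2 := by nlinarith
      have := key ((D + 1) / ‖g‖ ^ 2)
      rw [div_mul_cancel₀ _ (ne_of_gt hgpos), ← hL0] at this
      nlinarith
  -- combinatorial computation of the sum
  set c1 : ℕ := (d - 1).choose (b - 1) with hc1
  set C : ℕ := d.choose b with hCdef
  have hCpos : 0 < C := Nat.choose_pos hbd
  -- b * C = d * c1
  have hratio : b * C = d * c1 := by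
    have := Nat.add_one_mul_choose_eq (d - 1) (b - 1)
    have hd' : (d - 1).succ = d := Nat.succ_pred_eq_of_pos hd1
    have hb' : (b - 1).succ = b := Nat.succ_pred_eq_of_pos hb1
    rw [show d - 1 + 1 = d from hd', show b - 1 + 1 = b from hb'] at this
    rw [hCdef, hc1, mul_comm]
    exact this.symm
  have hadd : C = c1 + (d - 1).choose b := by
    have hcs := Nat.choose_succ_succ (d - 1) (b - 1)
    simp only [Nat.succ_eq_add_one, Nat.sub_add_cancel hd1, Nat.sub_add_cancel hb1] at hcs
    exact hcs
  have hc1le : c1 ≤ C := by omega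
  -- rewrite the sum
  have hsum_eq : ∑ S ∈ (Finset.univ : Finset (Fin d)).powersetCard b,
      ‖h + maskE S (f' x - h) - f' xstar‖ ^ 2
      = (c1 : ℝ) * ‖g‖ ^ 2 + ((C : ℝ) - c1) * ‖h - f' xstar‖ ^ 2 := by
    have hterm : ∀ S ∈ (Finset.univ : Finset (Fin d)).powersetCard b,
        ‖h + maskE S (f' x - h) - f' xstar‖ ^ 2
          = ∑ j, (if j ∈ S then (f' x j - f' xstar j) ^ 2 else (h j - f' xstar j) ^ 2) := by
      intro S _
      rw [norm_sq_eq_sum']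
      refine Finset.sum_congr rfl fun j _ => ?_
      by_cases hj : j ∈ S <;>
        simp only [maskE, hj, if_true, if_false, PiLp.add_apply, PiLp.sub_apply] <;> ring
    rw [Finset.sum_congr rfl hterm, Finset.sum_comm]
    have hjsum : ∀ j : Fin d,
        (∑ S ∈ (Finset.univ : Finset (Fin d)).powersetCard b,
          (if j ∈ S then (f' x j - f' xstar j) ^ 2 else (h j - f' xstar j) ^ 2))
        = (c1 : ℝ) * (f' x j - f' xstar j) ^ 2 + ((C : ℝ) - c1) * (h j - f' xstar j) ^ 2 := by
      intro j
      rw [Finset.sum_ite, Finset.sum_const, Finset.sum_const]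
      have h1 : ((((Finset.univ : Finset (Fin d)).powersetCard b).filter
          (fun S => j ∈ S)).card) = c1 := count_mem_powersetCard hb1 j
      have h2 : (((Finset.univ : Finset (Fin d)).powersetCard b).filter
          (fun S => ¬ j ∈ S)).card = C - c1 := by
        have := Finset.card_filter_add_card_filter_not
          (s := (Finset.univ : Finset (Fin d)).powersetCard b) (p := fun S => j ∈ S)
        rw [Finset.card_powersetCard, Finset.card_univ, Fintype.card_fin] at this
        omega
      rw [h1, h2, nsmul_eq_mul, nsmul_eq_mul, Nat.cast_sub hc1le]
    rw [Finset.sum_congr rfl fun j _ => hjsum j, Finset.sum_add_distrib,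
      ← Finset.mul_sum, ← Finset.mul_sum, norm_sq_eq_sum', norm_sq_eq_sum']
    simp only [hg, PiLp.sub_apply]
  rw [hsum_eq]
  -- final arithmetic
  have hdr : (0 : ℝ) < d := by exact_mod_cast hd1
  have hCr : (0 : ℝ) < C := by exact_mod_cast hCpos
  have hc1r : (c1 : ℝ) = (b : ℝ) / d * C := by
    have hr : (b : ℝ) * C = (d : ℝ) * c1 := by exact_mod_cast hratio
    field_simp
    linarith
  have hbd' : (b : ℝ) / d ≤ 1 := by
    rw [div_le_one hdr]; exact_mod_cast hbd
  have hVnn : 0 ≤ ‖h - f' xstar‖ ^ 2 := sq_nonneg _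
  have hLHS : ((C : ℝ))⁻¹ * ((c1 : ℝ) * ‖g‖ ^ 2 + ((C : ℝ) - c1) * ‖h - f' xstar‖ ^ 2)
      = (b : ℝ) / d * ‖g‖ ^ 2 + (1 - (b : ℝ) / d) * ‖h - f' xstar‖ ^ 2 := by
    rw [hc1r]
    field_simp
  rw [hCdef] at hLHS
  rw [hLHS]
  have hmul : (b : ℝ) / d * ‖g‖ ^ 2 ≤ (b : ℝ) / d * (2 * L * D) :=
    mul_le_mul_of_nonneg_left hU (by positivity)
  have : 2 * (b : ℝ) * L / d * D = (b : ℝ) / d * (2 * L * D) := by ring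
  rw [this]
  linarith
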